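/- Let n ≥ K ≥ 1, let g : {1,…,n} → {1,…,K} be surjective, and let θ ∈ ℝⁿ have θ(i) > 0 for all i. Define θ_k ∈ ℝⁿ by θ_k(i) = θ(i) if g(i) = k and 0 otherwise, f̄_k = θ_k/‖θ_k‖ and β_k = ‖θ_k‖²/‖θ‖². Let P be a symmetric K×K real matrix and let P̄ be the K×K matrix with entries P̄_{k₁k₂} = √(β_{k₁}β_{k₂})·P_{k₁k₂}, with spectral decomposition P̄ = Σ_{i=1}^K λ̄_i q̄_i q̄_iᵀ where q̄_1,…,q̄_K are orthonormal. Define the n×n matrix M with entries M(i,j) = θ(i)θ(j)·P_{g(i)g(j)} and the vectors q_i = Σ_{k=1}^K q̄_i(k)·f̄_k for i = 1,…,K. Then q_1,…,q_K are orthonormal, M·q_i = (‖θ‖²·λ̄_i)·q_i for each i ≤ K, and M = Σ_{i=1}^K (‖θ‖²·λ̄_i) q_i q_iᵀ (so M has rank at most K). -/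

import Mathlib

open Finset Matrix

/-- **Eigen-transfer for the degree corrected block model population matrix.**
If `M(i,j) = θ(i)θ(j) P (g i) (g j)` and `P̄` is the rescaled `K × K` matrix with spectral
decomposition `P̄ = Σ λ̄ᵢ q̄ᵢ q̄ᵢᵀ`, then the vectors `qᵢ = Σₖ q̄ᵢ(k) f̄ₖ` are orthonormal
eigenvectors of `M` with eigenvalues `‖θ‖² λ̄ᵢ`, and `M = Σᵢ (‖θ‖² λ̄ᵢ) qᵢ qᵢᵀ`
(so `M` has rank at most `K`). -/
theorem dcbm_population_eigen_transfer
    (n K : ℕ) (hK : 1 ≤ K) (hKn : K ≤ n)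
    (g : Fin n → Fin K) (hg : Function.Surjective g)
    (θ : Fin n → ℝ) (hθ : ∀ i, 0 < θ i)
    -- the restricted degree vectors, their normalizations and weights
    (θk : Fin K → Fin n → ℝ)
    (hθk : ∀ k i, θk k i = if g i = k then θ i else 0)
    (fbar : Fin K → Fin n → ℝ)
    (hfbar : ∀ k i, fbar k i = θk k i / Real.sqrt (∑ x, θk k x ^ 2))
    (β : Fin K → ℝ) (hβ : ∀ k, β k = (∑ x, θk k x ^ 2) / (∑ x, θ x ^ 2))
    -- the community-wise matrix and its rescaling
    (P : Matrix (Fin K) (Fin K) ℝ) (hPsymm : P.IsSymm)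
    (Pbar : Matrix (Fin K) (Fin K) ℝ)
    (hPbar : ∀ k₁ k₂, Pbar k₁ k₂ = Real.sqrt (β k₁ * β k₂) * P k₁ k₂)
    -- spectral decomposition of P̄ with orthonormal eigenvectors
    (lamb : Fin K → ℝ) (qb : Fin K → Fin K → ℝ)
    (hqbortho : ∀ i j, (∑ k, qb i k * qb j k) = if i = j then (1 : ℝ) else 0)
    (hdecomp : ∀ k₁ k₂, Pbar k₁ k₂ = ∑ i, lamb i * qb i k₁ * qb i k₂)
    -- the population matrix and the transferred eigenvectors
    (M : Matrix (Fin n) (Fin n) ℝ) (hM : ∀ i j, M i j = θ i * θ j * P (g i) (g j))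
    (q : Fin K → Fin n → ℝ) (hq : ∀ i x, q i x = ∑ k, qb i k * fbar k x) :
    (∀ i j, (∑ x, q i x * q j x) = if i = j then (1 : ℝ) else 0) ∧
    (∀ i, M *ᵥ q i = ((∑ x, θ x ^ 2) * lamb i) • q i) ∧
    (∀ a b, M a b = ∑ i, (∑ x, θ x ^ 2) * lamb i * q i a * q i b) ∧
    M.rank ≤ K := by

  set T : ℝ := ∑ x, θ x ^ 2 with hTdef
  set S : Fin K → ℝ := fun k => ∑ x, θk k x ^ 2 with hSdef
  have hSeq : ∀ k, (∑ x, θk k x ^ 2) = S k := fun k => rfl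
  have hn : 0 < n := lt_of_lt_of_le hK hKn
  have hTpos : 0 < T := by
    apply Finset.sum_pos
    · intro i _; exact pow_pos (hθ i) 2
    · exact ⟨⟨0, hn⟩, Finset.mem_univ _⟩
  have hT0 : T ≠ 0 := ne_of_gt hTpos
  have hSpos : ∀ k, 0 < S k := by
    intro k
    obtain ⟨i, hi⟩ := hg k
    apply Finset.sum_pos'
    · intro x _; positivity
    · refine ⟨i, Finset.mem_univ _, ?_⟩
      rw [hθk, if_pos hi]
      exact pow_pos (hθ i) 2
  have hsqS : ∀ k, Real.sqrt (S k) ≠ 0 := fun k =>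
    ne_of_gt (Real.sqrt_pos.mpr (hSpos k))
  have sqrt_sq : ∀ k, Real.sqrt (S k) * Real.sqrt (S k) = S k := fun k =>
    Real.mul_self_sqrt (hSpos k).le
  -- formula for q
  have hqform : ∀ i x, q i x = qb i (g x) * θ x / Real.sqrt (S (g x)) := by
    intro i x
    rw [hq]
    have h1 : ∀ k, qb i k * fbar k x
        = if g x = k then qb i (g x) * θ x / Real.sqrt (S (g x)) else 0 := by
      intro k
      rw [hfbar, hθk, hSeq]
      by_cases h : g x = k
      · subst h; rw [if_pos rfl, if_pos rfl, mul_div_assoc]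
      · rw [if_neg h, if_neg h, zero_div, mul_zero]
    rw [Finset.sum_congr rfl (fun k _ => h1 k), Finset.sum_ite_eq, if_pos (Finset.mem_univ _)]
  -- summation over fibers
  have hfiber : ∀ h : Fin K → ℝ, ∑ x, h (g x) * θ x ^ 2 = ∑ k, h k * S k := by
    intro h
    have h1 : ∀ k, h k * S k = ∑ x, (if g x = k then h k * θ x ^ 2 else 0) := by
      intro k
      rw [hSdef, Finset.mul_sum]
      apply Finset.sum_congr rfl
      intro x _
      rw [hθk]
      by_cases hx : g x = k <;> simp [hx]
    rw [Finset.sum_congr rfl (fun k _ => h1 k), Finset.sum_comm]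
    apply Finset.sum_congr rfl
    intro x _
    rw [Finset.sum_ite_eq, if_pos (Finset.mem_univ _)]
  -- orthonormality of q
  have hortho : ∀ i j, (∑ x, q i x * q j x) = if i = j then (1 : ℝ) else 0 := by
    intro i j
    have h1 : ∀ x, q i x * q j x
        = (fun k => qb i k * qb j k / S k) (g x) * θ x ^ 2 := by
      intro x
      show q i x * q j x = qb i (g x) * qb j (g x) / S (g x) * θ x ^ 2
      rw [hqform, hqform, div_mul_div_comm, sqrt_sq]
      ring
    calc ∑ x, q i x * q j x
        = ∑ x, (fun k => qb i k * qb j k / S k) (g x) * θ x ^ 2 :=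
          Finset.sum_congr rfl (fun x _ => h1 x)
      _ = ∑ k, (fun k => qb i k * qb j k / S k) k * S k :=
          hfiber (fun k => qb i k * qb j k / S k)
      _ = ∑ k, qb i k * qb j k := by
          apply Finset.sum_congr rfl
          intro k _
          show qb i k * qb j k / S k * S k = _
          rw [div_mul_cancel₀ _ (ne_of_gt (hSpos k))]
      _ = if i = j then (1 : ℝ) else 0 := hqbortho i j
  -- Pbar in terms of S
  have hPbar' : ∀ k₁ k₂, Pbar k₁ k₂
      = Real.sqrt (S k₁) * Real.sqrt (S k₂) / T * P k₁ k₂ := by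
    intro k₁ k₂
    rw [hPbar, hβ, hβ, hSeq, hSeq]
    congr 1
    rw [Real.sqrt_mul (div_nonneg (hSpos k₁).le hTpos.le),
      Real.sqrt_div (hSpos k₁).le, Real.sqrt_div (hSpos k₂).le,
      div_mul_div_comm, Real.mul_self_sqrt hTpos.le]
  -- eigen relation for qb
  have hqbeig : ∀ j k₁, ∑ k, Pbar k₁ k * qb j k = lamb j * qb j k₁ := by
    intro j k₁
    calc ∑ k, Pbar k₁ k * qb j k
        = ∑ k, ∑ i, lamb i * qb i k₁ * qb i k * qb j k := by
          apply Finset.sum_congr rfl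
          intro k _
          rw [hdecomp, Finset.sum_mul]
      _ = ∑ i, ∑ k, lamb i * qb i k₁ * qb i k * qb j k := Finset.sum_comm
      _ = ∑ i, lamb i * qb i k₁ * ∑ k, qb i k * qb j k := by
          apply Finset.sum_congr rfl
          intro i _
          rw [Finset.mul_sum]
          apply Finset.sum_congr rfl
          intro k _
          ring
      _ = ∑ i, lamb i * qb i k₁ * (if i = j then (1:ℝ) else 0) :=
          Finset.sum_congr rfl (fun i _ => by rw [hqbortho])
      _ = lamb j * qb j k₁ := by
          rw [Finset.sum_eq_single j]
          · rw [if_pos rfl, mul_one]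
          · intro b _ hb; rw [if_neg hb, mul_zero]
          · intro h; exact absurd (Finset.mem_univ j) h
  -- transferred eigen relation for P
  have hPeig : ∀ j k₁, ∑ k, P k₁ k * Real.sqrt (S k) * qb j k
      = T * lamb j * qb j k₁ / Real.sqrt (S k₁) := by
    intro j k₁
    have h1 := hqbeig j k₁
    rw [Finset.sum_congr rfl (fun k _ => by rw [hPbar' k₁ k])] at h1
    have h2 : Real.sqrt (S k₁) / T * ∑ k, P k₁ k * Real.sqrt (S k) * qb j k
        = lamb j * qb j k₁ := by
      rw [Finset.mul_sum, ← h1]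
      apply Finset.sum_congr rfl
      intro k _
      ring
    rw [eq_div_iff (hsqS k₁)]
    field_simp at h2
    linear_combination h2
  -- eigenvector property
  have heig : ∀ j, M *ᵥ q j = (T * lamb j) • q j := by
    intro j
    funext a
    show ∑ b, M a b * q j b = (T * lamb j) • q j a
    have h1 : ∀ b, M a b * q j b
        = (fun k => θ a * (P (g a) k * qb j k / Real.sqrt (S k))) (g b) * θ b ^ 2 := by
      intro b
      show M a b * q j b = θ a * (P (g a) (g b) * qb j (g b) / Real.sqrt (S (g b))) * θ b ^ 2
      rw [hM, hqform]
      ring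
    calc ∑ b, M a b * q j b
        = ∑ b, (fun k => θ a * (P (g a) k * qb j k / Real.sqrt (S k))) (g b) * θ b ^ 2 :=
          Finset.sum_congr rfl (fun b _ => h1 b)
      _ = ∑ k, (fun k => θ a * (P (g a) k * qb j k / Real.sqrt (S k))) k * S k :=
          hfiber (fun k => θ a * (P (g a) k * qb j k / Real.sqrt (S k)))
      _ = ∑ k, θ a * (P (g a) k * Real.sqrt (S k) * qb j k) := by
          apply Finset.sum_congr rfl
          intro k _
          show θ a * (P (g a) k * qb j k / Real.sqrt (S k)) * S k = _
          calc θ a * (P (g a) k * qb j k / Real.sqrt (S k)) * S k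
              = θ a * P (g a) k * qb j k * (S k / Real.sqrt (S k)) := by ring
            _ = θ a * (P (g a) k * Real.sqrt (S k) * qb j k) := by
                rw [Real.div_sqrt]; ring
      _ = θ a * ∑ k, P (g a) k * Real.sqrt (S k) * qb j k := by rw [Finset.mul_sum]
      _ = θ a * (T * lamb j * qb j (g a) / Real.sqrt (S (g a))) := by rw [hPeig]
      _ = (T * lamb j) • q j a := by
          rw [smul_eq_mul, hqform]
          ring
  -- decomposition
  have hdec : ∀ a b, M a b = ∑ i, T * lamb i * q i a * q i b := by
    intro a b
    have hsa := hsqS (g a)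
    have hsb := hsqS (g b)
    calc M a b = θ a * θ b * P (g a) (g b) := hM a b
      _ = (T * θ a * θ b / (Real.sqrt (S (g a)) * Real.sqrt (S (g b))))
          * (Real.sqrt (S (g a)) * Real.sqrt (S (g b)) / T * P (g a) (g b)) := by
          field_simp
      _ = (T * θ a * θ b / (Real.sqrt (S (g a)) * Real.sqrt (S (g b))))
          * Pbar (g a) (g b) := by rw [hPbar']
      _ = (T * θ a * θ b / (Real.sqrt (S (g a)) * Real.sqrt (S (g b))))
          * ∑ i, lamb i * qb i (g a) * qb i (g b) := by rw [hdecomp]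
      _ = ∑ i, T * lamb i * q i a * q i b := by
          rw [Finset.mul_sum]
          apply Finset.sum_congr rfl
          intro i _
          rw [hqform, hqform]
          field_simp
  refine ⟨hortho, heig, hdec, ?_⟩
  -- rank
  have hfac : M = (Matrix.of fun a i => T * lamb i * q i a) *
      (Matrix.of fun (i : Fin K) b => q i b) := by
    ext a b
    rw [hdec, Matrix.mul_apply]
    apply Finset.sum_congr rfl
    intro i _
    simp only [Matrix.of_apply]
    try ring
  calc M.rank ≤ (Matrix.of fun (i : Fin K) b => q i b).rank := by
        rw [hfac]; exact Matrix.rank_mul_le_right _ _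
    _ ≤ K := by
        simpa using Matrix.rank_le_card_height (Matrix.of fun (i : Fin K) b => q i b)
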